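/- Let E and P be normed vector spaces, K ≥ 0, and let G : E → P → E satisfy ‖G(x)(p) − G(y)(q)‖ ≤ K(‖x − y‖ + ‖p − q‖) for all x, y ∈ E and p, q ∈ P. Let T > 0, x₁, x₂ ∈ E, p₁, p₂ ∈ P, and let w₁, w₂ : ℝ → E be continuous functions satisfying the integral equations w_i(t) = x_i + ∫_0^t G(w_i(s))(p_i) ds for all t ∈ [0,T], i = 1, 2. Then for every t ∈ [0,T], ‖w₁(t) − w₂(t)‖ ≤ e^{Kt} (‖x₁ − x₂‖ + K·T·‖p₁ − p₂‖). In particular, solutions depend Lipschitz-continuously on the initial condition and on the parameter. -/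

import Mathlib

open Set intervalIntegral Real

/-- solutions of a parameter-dependent integral equation depend
Lipschitz-continuously on the initial condition and on the parameter. -/
theorem integral_equation_continuous_dependence
    {E P : Type*} [NormedAddCommGroup E] [NormedSpace ℝ E] [CompleteSpace E]
    [NormedAddCommGroup P]
    (K : ℝ) (hK : 0 ≤ K) (G : E → P → E)
    (hG : ∀ (x y : E) (p q : P), ‖G x p - G y q‖ ≤ K * (‖x - y‖ + ‖p - q‖))
    (T : ℝ) (hT : 0 < T) (x₁ x₂ : E) (p₁ p₂ : P)
    (w₁ w₂ : ℝ → E) (hw₁ : Continuous w₁) (hw₂ : Continuous w₂)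
    (heq₁ : ∀ t ∈ Set.Icc (0 : ℝ) T, w₁ t = x₁ + ∫ s in (0 : ℝ)..t, G (w₁ s) p₁)
    (heq₂ : ∀ t ∈ Set.Icc (0 : ℝ) T, w₂ t = x₂ + ∫ s in (0 : ℝ)..t, G (w₂ s) p₂) :
    ∀ t ∈ Set.Icc (0 : ℝ) T,
      ‖w₁ t - w₂ t‖ ≤ Real.exp (K * t) * (‖x₁ - x₂‖ + K * T * ‖p₁ - p₂‖) := by
  -- continuity of the integrands
  have hlip : ∀ (p : P), Continuous (fun x : E => G x p) := by
    intro p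
    apply LipschitzWith.continuous (K := ⟨K, hK⟩)
    apply LipschitzWith.of_dist_le_mul
    intro x y
    simp only [dist_eq_norm]
    have := hG x y p p
    exact (by simpa using this : ‖G x p - G y p‖ ≤ K * ‖x - y‖)
  have hc₁ : Continuous fun t => G (w₁ t) p₁ := (hlip p₁).comp hw₁
  have hc₂ : Continuous fun t => G (w₂ t) p₂ := (hlip p₂).comp hw₂
  set F₁ : ℝ → E := fun t => x₁ + ∫ s in (0:ℝ)..t, G (w₁ s) p₁ with hF₁def
  set F₂ : ℝ → E := fun t => x₂ + ∫ s in (0:ℝ)..t, G (w₂ s) p₂ with hF₂def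
  have hd₁ : ∀ t : ℝ, HasDerivAt F₁ (G (w₁ t) p₁) t := by
    intro t
    have := (intervalIntegral.integral_hasDerivAt_right
      (hc₁.intervalIntegrable 0 t)
      (hc₁.stronglyMeasurableAtFilter _ _)
      hc₁.continuousAt)
    simpa [hF₁def] using this.const_add x₁
  have hd₂ : ∀ t : ℝ, HasDerivAt F₂ (G (w₂ t) p₂) t := by
    intro t
    have := (intervalIntegral.integral_hasDerivAt_right
      (hc₂.intervalIntegrable 0 t)
      (hc₂.stronglyMeasurableAtFilter _ _)
      hc₂.continuousAt)
    simpa [hF₂def] using this.const_add x₂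
  set f : ℝ → E := fun t => F₁ t - F₂ t with hfdef
  have hfeq : ∀ t ∈ Set.Icc (0:ℝ) T, f t = w₁ t - w₂ t := by
    intro t ht
    simp only [hfdef, hF₁def, hF₂def]
    rw [← heq₁ t ht, ← heq₂ t ht]
  have hfc : ContinuousOn f (Icc 0 T) := by
    apply Continuous.continuousOn
    exact continuous_iff_continuousAt.2 fun t =>
      ((hd₁ t).continuousAt.sub (hd₂ t).continuousAt)
  have key := norm_le_gronwallBound_of_norm_deriv_right_le
    (f := f) (f' := fun t => G (w₁ t) p₁ - G (w₂ t) p₂)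
    (δ := ‖x₁ - x₂‖) (K := K) (ε := K * ‖p₁ - p₂‖) (a := 0) (b := T)
    hfc
    (fun t _ => ((hd₁ t).sub (hd₂ t)).hasDerivWithinAt)
    (by simp [hfdef, hF₁def, hF₂def])
    (by
      intro t ht
      have ht' : t ∈ Icc (0:ℝ) T := ⟨ht.1, ht.2.le⟩
      rw [hfeq t ht']
      calc ‖G (w₁ t) p₁ - G (w₂ t) p₂‖ ≤ K * (‖w₁ t - w₂ t‖ + ‖p₁ - p₂‖) := hG _ _ _ _
        _ = K * ‖w₁ t - w₂ t‖ + K * ‖p₁ - p₂‖ := by ring)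
  intro t ht
  have h1 := key t ht
  rw [hfeq t ht] at h1
  refine h1.trans ?_
  -- bound the gronwallBound
  rcases eq_or_lt_of_le hK with hK0 | hKpos
  · subst hK0
    simp only [gronwallBound_K0, zero_mul, add_zero, mul_zero, exp_zero, one_mul]
    simp
  · rw [gronwallBound_of_K_ne_0 hKpos.ne']
    have hexp : Real.exp (K * (t - 0)) = Real.exp (K * t) := by ring_nf
    rw [sub_zero]
    have h2 : K * ‖p₁ - p₂‖ / K = ‖p₁ - p₂‖ := by field_simp
    rw [h2]
    have hKt : 0 ≤ K * t := mul_nonneg hK ht.1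
    have hst : Real.exp (K * t) - 1 ≤ K * t * Real.exp (K * t) := by
      have := Real.add_one_le_exp (-(K * t))
      have hpos := Real.exp_pos (K * t)
      have hinv : rexp (-(K * t)) * rexp (K * t) = 1 := by
        rw [← Real.exp_add]; simp
      nlinarith [Real.exp_pos (-(K * t))]
    have h3 : ‖p₁ - p₂‖ * (Real.exp (K * t) - 1) ≤ Real.exp (K * t) * (K * T * ‖p₁ - p₂‖) := by
      have hp : (0:ℝ) ≤ ‖p₁ - p₂‖ := norm_nonneg _
      have h4 : K * t * Real.exp (K * t) ≤ K * T * Real.exp (K * t) := by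
        apply mul_le_mul_of_nonneg_right _ (Real.exp_pos _).le
        exact mul_le_mul_of_nonneg_left ht.2 hK
      nlinarith
    show ‖x₁ - x₂‖ * rexp (K * t) + ‖p₁ - p₂‖ * (rexp (K * t) - 1)
        ≤ rexp (K * t) * (‖x₁ - x₂‖ + K * T * ‖p₁ - p₂‖)
    nlinarith [Real.exp_pos (K * t), norm_nonneg (x₁ - x₂)]
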